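/- Let Y be an m×n matrix over a commutative ring with all t×t minors zero, and for a ≤ m, b ≤ n let Y(a,b) denote the submatrix with row indices ≤ a and column indices ≤ b, and I_{t-1}(Y(a,b)) the ideal generated by its (t-1)×(t-1) minors. Then for all a < m and b < n, I_{t-1}(Y(a,b+1)) · I_{t-1}(Y(a+1,b)) = I_{t-1}(Y(a,b)) · I_{t-1}(Y(a+1,b+1)). -/

import Mathlib

open Matrix

namespace MinorExchange

variable {R : Type*} [CommRing R]

lemma snoc_comp_succAbove_castSucc {α : Sort*} {k : ℕ} (f : Fin (k+1) → α) (x : α)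
    (i : Fin (k+1)) :
    (Fin.snoc f x : Fin (k+2) → α) ∘ (Fin.castSucc i).succAbove = Fin.snoc (f ∘ i.succAbove) x := by
  funext j
  refine Fin.lastCases ?_ (fun j' => ?_) j
  · have h : (Fin.castSucc i).succAbove (Fin.last k) = Fin.last (k+1) := by
      rw [Fin.succAbove_of_le_castSucc _ _ (Fin.castSucc_le_castSucc_iff.2 (Fin.le_last i)),
        Fin.succ_last]
    rw [Function.comp_apply, h, Fin.snoc_last, Fin.snoc_last]
  · by_cases h : j'.castSucc < i
    · rw [Function.comp_apply, Fin.succAbove_castSucc_of_lt _ _ h,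
        Fin.snoc_castSucc, Fin.snoc_castSucc, Function.comp_apply,
        Fin.succAbove_of_castSucc_lt _ _ h]
    · push_neg at h
      rw [Function.comp_apply, Fin.succAbove_castSucc_of_le _ _ h,
        Fin.succ_castSucc, Fin.snoc_castSucc, Fin.snoc_castSucc, Function.comp_apply,
        Fin.succAbove_of_le_castSucc _ _ h]

lemma det_updateRow_lin {N : ℕ} (M : Matrix (Fin N) (Fin N) R) (j : Fin N) {ι : Type*}
    (t : Finset ι) (c : ι → R) (v : ι → Fin N → R) :
    (M.updateRow j (∑ q ∈ t, c q • v q)).det = ∑ q ∈ t, c q * (M.updateRow j (v q)).det := by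
  classical
  induction t using Finset.induction_on with
  | empty =>
    rw [Finset.sum_empty, Finset.sum_empty,
      show (0 : Fin N → R) = (0 : R) • (fun _ => (0:R)) from by simp,
      Matrix.det_updateRow_smul, zero_mul]
  | insert q t hq ih =>
    rw [Finset.sum_insert hq, Matrix.det_updateRow_add, Matrix.det_updateRow_smul, ih,
      Finset.sum_insert hq]

lemma det_snoc_row {m n k : ℕ} (Y : Matrix (Fin m) (Fin n) R)
    (s : Fin k → Fin m) (e : Fin (k+1) → Fin n) (p : Fin m) :
    (Y.submatrix (Fin.snoc s p) e).det
      = ∑ q : Fin (k+1), (-1:R)^(k+(q:ℕ)) * Y p (e q) * (Y.submatrix s (e ∘ q.succAbove)).det := by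
  rw [Matrix.det_succ_row (Y.submatrix (Fin.snoc s p) e) (Fin.last k)]
  refine Finset.sum_congr rfl fun q _ => ?_
  rw [Matrix.submatrix_apply, Fin.snoc_last, Matrix.submatrix_submatrix, Fin.succAbove_last,
    Fin.snoc_comp_castSucc, Fin.val_last]

lemma snoc_val_lt {N c p : ℕ} {h : Fin N → Fin p} {x : Fin p} (hh : ∀ i, (h i : ℕ) < c)
    (hx : (x : ℕ) < c) : ∀ i : Fin (N+1), ((Fin.snoc h x : Fin (N+1) → Fin p) i : ℕ) < c := by
  intro i
  refine Fin.lastCases ?_ (fun j => ?_) i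
  · rw [Fin.snoc_last]; exact hx
  · rw [Fin.snoc_castSucc]; exact hh j

lemma det_perm_rows {m n N : ℕ} (Y : Matrix (Fin m) (Fin n) R) (f : Fin N → Fin m)
    (g : Fin N → Fin n) (σ : Equiv.Perm (Fin N)) :
    ∃ ε : R, (Y.submatrix f g).det = ε * (Y.submatrix (f ∘ σ) g).det := by
  refine ⟨((Equiv.Perm.sign σ : ℤ) : R), ?_⟩
  have h : Y.submatrix (f ∘ σ) g = (Y.submatrix f g).submatrix σ id := by
    ext i j; rfl
  rw [h, Matrix.det_permute, ← mul_assoc, ← Int.cast_mul, ← Units.val_mul,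
    Int.units_mul_self, Units.val_one, Int.cast_one, one_mul]

lemma det_perm_cols {m n N : ℕ} (Y : Matrix (Fin m) (Fin n) R) (f : Fin N → Fin m)
    (g : Fin N → Fin n) (σ : Equiv.Perm (Fin N)) :
    ∃ ε : R, (Y.submatrix f g).det = ε * (Y.submatrix f (g ∘ σ)).det := by
  refine ⟨((Equiv.Perm.sign σ : ℤ) : R), ?_⟩
  have h : Y.submatrix f (g ∘ σ) = (Y.submatrix f g).submatrix id σ := by
    ext i j; rfl
  rw [h, Matrix.det_permute', ← mul_assoc, ← Int.cast_mul, ← Units.val_mul,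
    Int.units_mul_self, Units.val_one, Int.cast_one, one_mul]

lemma key {m n k : ℕ} (Y : Matrix (Fin m) (Fin n) R)
    (hY : ∀ (f : Fin (k+2) → Fin m) (g : Fin (k+2) → Fin n), (Y.submatrix f g).det = 0)
    (f : Fin (k+1) → Fin m) (g : Fin (k+1) → Fin n)
    (s : Fin k → Fin m) (e : Fin (k+1) → Fin n) (p0 : Fin m) :
    (Y.submatrix f g).det * (Y.submatrix (Fin.snoc s p0) e).det
      = ∑ i : Fin (k+1), (-1:R)^(k+(i:ℕ)) *
          ((Y.submatrix (Fin.snoc s (f i)) e).det *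
           (Y.submatrix (Fin.snoc (f ∘ i.succAbove) p0) g).det) := by
  set u : Fin m → R := fun p => (Y.submatrix (Fin.snoc s p) e).det with hu
  set F : Fin (k+2) → Fin m := Fin.snoc f p0 with hF
  set H : Matrix (Fin (k+2)) (Fin (k+2)) R :=
    Fin.snoc (fun j => fun i => Y (F i) (g j)) (fun i => u (F i)) with hH
  have hHlast : ∀ i, H (Fin.last (k+1)) i = u (F i) := fun i => by
    rw [hH]; rw [Fin.snoc_last]
  have hHcast : ∀ (j : Fin (k+1)) (i : Fin (k+2)), H (Fin.castSucc j) i = Y (F i) (g j) :=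
    fun j i => by rw [hH]; rw [Fin.snoc_castSucc]
  have hdetH : H.det = 0 := by
    have h2 : (∑ q : Fin (k+1),
        ((-1:R)^(k+(q:ℕ)) * (Y.submatrix s (e ∘ q.succAbove)).det) • (fun i => Y (F i) (e q)))
        = H (Fin.last (k+1)) := by
      funext i
      rw [Finset.sum_apply, hHlast]
      simp only [hu]
      rw [det_snoc_row Y s e (F i)]
      refine Finset.sum_congr rfl fun q _ => ?_
      simp only [Pi.smul_apply, smul_eq_mul]
      ring
    have h1 : H = H.updateRow (Fin.last (k+1)) (∑ q : Fin (k+1),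
        ((-1:R)^(k+(q:ℕ)) * (Y.submatrix s (e ∘ q.succAbove)).det) • (fun i => Y (F i) (e q))) := by
      rw [h2, Matrix.updateRow_eq_self]
    rw [h1, det_updateRow_lin]
    refine Finset.sum_eq_zero fun q _ => ?_
    have h3 : H.updateRow (Fin.last (k+1)) (fun i => Y (F i) (e q))
        = (Y.submatrix F (Fin.snoc g (e q))).transpose := by
      ext j i
      refine Fin.lastCases ?_ (fun j' => ?_) j
      · rw [Matrix.updateRow_self, Matrix.transpose_apply, Matrix.submatrix_apply, Fin.snoc_last]
      · rw [Matrix.updateRow_ne (Fin.castSucc_lt_last j').ne, hHcast, Matrix.transpose_apply,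
          Matrix.submatrix_apply, Fin.snoc_castSucc]
    rw [h3, Matrix.det_transpose, hY, mul_zero]
  have hexp : H.det = (∑ i : Fin (k+1), (-1:R)^(k+1+(i:ℕ)) *
        (u (f i) * (Y.submatrix (Fin.snoc (f ∘ i.succAbove) p0) g).det))
      + u p0 * (Y.submatrix f g).det := by
    rw [Matrix.det_succ_row H (Fin.last (k+1))]
    have h4 : ∀ i : Fin (k+2),
        (H.submatrix (Fin.last (k+1)).succAbove i.succAbove)
          = (Y.submatrix (F ∘ i.succAbove) g).transpose := by
      intro i; ext j i'
      rw [Matrix.submatrix_apply, Fin.succAbove_last, hHcast, Matrix.transpose_apply,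
        Matrix.submatrix_apply, Function.comp_apply]
    calc ∑ j : Fin (k+2), (-1:R)^((Fin.last (k+1) : ℕ) + (j:ℕ)) * H (Fin.last (k+1)) j *
          (H.submatrix (Fin.last (k+1)).succAbove j.succAbove).det
        = ∑ j : Fin (k+2), (-1:R)^(k+1+(j:ℕ)) * u (F j) *
            (Y.submatrix (F ∘ j.succAbove) g).det := by
          refine Finset.sum_congr rfl fun j _ => ?_
          rw [hHlast, h4, Matrix.det_transpose, Fin.val_last]
      _ = _ := by
          rw [Fin.sum_univ_castSucc]
          congr 1
          · refine Finset.sum_congr rfl fun i _ => ?_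
            rw [Fin.coe_castSucc, show F (Fin.castSucc i) = f i from by
                rw [hF]; rw [Fin.snoc_castSucc],
              show F ∘ (Fin.castSucc i).succAbove = Fin.snoc (f ∘ i.succAbove) p0 from by
                rw [hF]; exact snoc_comp_succAbove_castSucc f p0 i]
            ring
          · rw [Fin.val_last, show F (Fin.last (k+1)) = p0 from by rw [hF]; rw [Fin.snoc_last],
              show F ∘ (Fin.last (k+1)).succAbove = f from by
                rw [hF, Fin.succAbove_last]; exact Fin.snoc_comp_castSucc,
              show ((-1:R))^(k+1+(k+1)) = 1 from by
                rw [show k+1+(k+1) = 2*(k+1) by ring, pow_mul]; norm_num]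
            rw [one_mul]
  have h0 : (∑ i : Fin (k+1), (-1:R)^(k+1+(i:ℕ)) *
        (u (f i) * (Y.submatrix (Fin.snoc (f ∘ i.succAbove) p0) g).det))
      + u p0 * (Y.submatrix f g).det = 0 := by rw [← hexp, hdetH]
  have hneg : (∑ i : Fin (k+1), (-1:R)^(k+1+(i:ℕ)) *
        (u (f i) * (Y.submatrix (Fin.snoc (f ∘ i.succAbove) p0) g).det))
      = - ∑ i : Fin (k+1), (-1:R)^(k+(i:ℕ)) *
        ((Y.submatrix (Fin.snoc s (f i)) e).det *
         (Y.submatrix (Fin.snoc (f ∘ i.succAbove) p0) g).det) := by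
    rw [← Finset.sum_neg_distrib]
    refine Finset.sum_congr rfl fun i _ => ?_
    simp only [hu]
    rw [show k+1+(i:ℕ) = (k+(i:ℕ))+1 from by ring, pow_succ]
    ring
  rw [hneg] at h0
  simp only [hu] at h0 ⊢
  linear_combination h0

end MinorExchange

open MinorExchange



/-- For an `m×n` matrix `Y` with all `t×t` minors zero, writing `I_{t-1}(Y(a,b))` for the ideal
generated by the `(t-1)`-minors of the top-left `a×b` submatrix, one has
`I_{t-1}(Y(a,b+1)) · I_{t-1}(Y(a+1,b)) = I_{t-1}(Y(a,b)) · I_{t-1}(Y(a+1,b+1))`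
for all `a < m`, `b < n`. -/
theorem minor_ideal_exchange {R : Type*} [CommRing R] {m n t : ℕ}
    (Y : Matrix (Fin m) (Fin n) R)
    (hY : ∀ (f : Fin t → Fin m) (g : Fin t → Fin n), (Y.submatrix f g).det = 0)
    (I : ℕ → ℕ → Ideal R)
    (hI : ∀ a b, I a b = Ideal.span {x : R |
      ∃ (f : Fin (t - 1) → Fin m) (g : Fin (t - 1) → Fin n),
        (∀ i, (f i : ℕ) < a) ∧ (∀ j, (g j : ℕ) < b) ∧ x = (Y.submatrix f g).det})
    (a b : ℕ) (ha : a < m) (hb : b < n) :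
    I a (b + 1) * I (a + 1) b = I a b * I (a + 1) (b + 1) := by
  rcases Nat.lt_or_ge t 2 with ht | ht
  · interval_cases t
    · have h1 : (1 : R) = 0 := by simpa using hY Fin.elim0 Fin.elim0
      have hall : ∀ x : R, x = 0 := fun x => by rw [← mul_one x, h1, mul_zero]
      have htriv : ∀ J K : Ideal R, J = K := fun J K => by
        ext x; rw [hall x]; simp
      exact htriv _ _
    · have hT : ∀ a' b' : ℕ, I a' b' = ⊤ := by
        intro a' b'
        rw [hI, Ideal.eq_top_iff_one]
        exact Ideal.subset_span ⟨Fin.elim0, Fin.elim0, fun i => i.elim0, fun j => j.elim0,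
          Matrix.det_fin_zero.symm⟩
      rw [hT, hT, hT, hT]
  · obtain ⟨k, rfl⟩ : ∃ k, t = k + 2 := ⟨t - 2, by omega⟩
    have memI : ∀ (a' b' : ℕ) (f : Fin (k+1) → Fin m) (g : Fin (k+1) → Fin n),
        (∀ i, (f i : ℕ) < a') → (∀ j, (g j : ℕ) < b') → (Y.submatrix f g).det ∈ I a' b' := by
      intro a' b' f g hf hg
      rw [hI]
      exact Ideal.subset_span ⟨f, g, hf, hg, rfl⟩
    have spanle : ∀ (a1 b1 a2 b2 : ℕ) (K : Ideal R),
        (∀ (f : Fin (k+1) → Fin m) (g : Fin (k+1) → Fin n),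
          (∀ i, (f i : ℕ) < a1) → (∀ j, (g j : ℕ) < b1) →
          ∀ (f' : Fin (k+1) → Fin m) (g' : Fin (k+1) → Fin n),
            (∀ i, (f' i : ℕ) < a2) → (∀ j, (g' j : ℕ) < b2) →
            (Y.submatrix f g).det * (Y.submatrix f' g').det ∈ K) →
        I a1 b1 * I a2 b2 ≤ K := by
      intro a1 b1 a2 b2 K h
      rw [hI a1 b1, hI a2 b2, Ideal.span_mul_span, Ideal.span_le]
      rintro z hz
      simp only [Set.mem_mul] at hz
      obtain ⟨x, hxS, y, hyS, rfl⟩ := hz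
      obtain ⟨f, g, hf, hg, rfl⟩ := hxS
      obtain ⟨f', g', hf', hg', rfl⟩ := hyS
      exact h f g hf hg f' g' hf' hg'
    refine le_antisymm ?_ ?_
    · -- I a (b+1) * I (a+1) b ≤ I a b * I (a+1) (b+1)
      refine spanle _ _ _ _ _ ?_
      intro f g hf hg f' g' hf' hg'
      by_cases hcase1 : ∀ j, (g j : ℕ) < b
      · exact Ideal.mul_mem_mul (memI a b f g hf hcase1)
          (memI (a+1) (b+1) f' g' hf' (fun j => Nat.lt_succ_of_lt (hg' j)))
      · by_cases hcase2 : ∀ i, (f' i : ℕ) < a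
        · rw [mul_comm ((Y.submatrix f g).det) ((Y.submatrix f' g').det)]
          exact Ideal.mul_mem_mul (memI a b f' g' hcase2 hg')
            (memI (a+1) (b+1) f g (fun i => Nat.lt_succ_of_lt (hf i)) hg)
        · push_neg at hcase1 hcase2
          obtain ⟨j0, hj0⟩ := hcase1
          obtain ⟨i0, hi0⟩ := hcase2
          have hgj0 : g j0 = ⟨b, hb⟩ := Fin.ext (show (g j0 : ℕ) = b by have := hg j0; omega)
          have hfi0 : f' i0 = ⟨a, ha⟩ := Fin.ext (show (f' i0 : ℕ) = a by have := hf' i0; omega)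
          by_cases hdup : ∃ i1, i1 ≠ i0 ∧ f' i1 = f' i0
          · obtain ⟨i1, hne, heq⟩ := hdup
            have hy : (Y.submatrix f' g').det = 0 :=
              Matrix.det_zero_of_row_eq hne (funext fun j => by
                rw [Matrix.submatrix_apply, Matrix.submatrix_apply, heq])
            rw [hy, mul_zero]
            exact Ideal.zero_mem _
          · set σ : Equiv.Perm (Fin (k+1)) := Equiv.swap i0 (Fin.last k) with hσ
            set τ : Equiv.Perm (Fin (k+1)) := Equiv.swap j0 (Fin.last k) with hτ
            obtain ⟨ε1, hx⟩ := det_perm_cols Y f g τ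
            obtain ⟨ε2, hy⟩ := det_perm_rows Y f' g' σ
            have hglast : (g ∘ τ) (Fin.last k) = (⟨b, hb⟩ : Fin n) := by
              rw [Function.comp_apply, hτ, Equiv.swap_apply_right, hgj0]
            have hflast : (f' ∘ σ) (Fin.last k) = (⟨a, ha⟩ : Fin m) := by
              rw [Function.comp_apply, hσ, Equiv.swap_apply_right, hfi0]
            have hgsnoc : g ∘ τ = Fin.snoc (Fin.init (g ∘ τ)) (⟨b, hb⟩ : Fin n) := by
              rw [← hglast]; exact (Fin.snoc_init_self _).symm
            have hfsnoc : f' ∘ σ = Fin.snoc (Fin.init (f' ∘ σ)) (⟨a, ha⟩ : Fin m) := by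
              rw [← hflast]; exact (Fin.snoc_init_self _).symm
            have hslt : ∀ i : Fin k, ((Fin.init (f' ∘ σ)) i : ℕ) < a := by
              intro i
              have h1 : σ (Fin.castSucc i) ≠ i0 := by
                intro hcon
                have h2 : σ (Fin.last k) = i0 := by rw [hσ]; exact Equiv.swap_apply_right _ _
                exact (Fin.castSucc_lt_last i).ne (σ.injective (hcon.trans h2.symm))
              have h3 : f' (σ (Fin.castSucc i)) ≠ f' i0 := fun hcon => hdup ⟨_, h1, hcon⟩
              have h4 := hf' (σ (Fin.castSucc i))
              rcases Nat.lt_succ_iff_lt_or_eq.mp h4 with h5 | h5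
              · exact h5
              · exact absurd (Fin.ext (by rw [h5, hfi0]) : f' (σ (Fin.castSucc i)) = f' i0) h3
            have hclt : ∀ j : Fin k, ((Fin.init (g ∘ τ)) j : ℕ) < b + 1 :=
              fun j => hg (τ (Fin.castSucc j))
            have hk := key Y hY f (Fin.snoc (Fin.init (g ∘ τ)) (⟨b, hb⟩ : Fin n))
              (Fin.init (f' ∘ σ)) g' (⟨a, ha⟩ : Fin m)
            have hmem : (Y.submatrix f (Fin.snoc (Fin.init (g ∘ τ)) (⟨b, hb⟩ : Fin n))).det *
                (Y.submatrix (Fin.snoc (Fin.init (f' ∘ σ)) (⟨a, ha⟩ : Fin m)) g').det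
                ∈ I a b * I (a+1) (b+1) := by
              rw [hk]
              refine Ideal.sum_mem _ fun i _ => ?_
              exact Ideal.mul_mem_left _ _ (Ideal.mul_mem_mul
                (memI a b _ g' (snoc_val_lt hslt (hf i)) hg')
                (memI (a+1) (b+1) _ _
                  (snoc_val_lt (fun i' => Nat.lt_succ_of_lt (hf _)) (Nat.lt_succ_self a))
                  (snoc_val_lt hclt (Nat.lt_succ_self b))))
            rw [hx, hy, hgsnoc, hfsnoc, mul_mul_mul_comm]
            exact Ideal.mul_mem_left _ _ hmem
    · -- I a b * I (a+1) (b+1) ≤ I a (b+1) * I (a+1) b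
      refine spanle _ _ _ _ _ ?_
      intro f g hf hg f' g' hf' hg'
      by_cases hcase1 : ∀ i, (f' i : ℕ) < a
      · rw [mul_comm ((Y.submatrix f g).det) ((Y.submatrix f' g').det)]
        exact Ideal.mul_mem_mul (memI a (b+1) f' g' hcase1 hg')
          (memI (a+1) b f g (fun i => Nat.lt_succ_of_lt (hf i)) hg)
      · by_cases hcase2 : ∀ j, (g' j : ℕ) < b
        · exact Ideal.mul_mem_mul (memI a (b+1) f g hf (fun j => Nat.lt_succ_of_lt (hg j)))
            (memI (a+1) b f' g' hf' hcase2)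
        · push_neg at hcase1 hcase2
          obtain ⟨i0, hi0⟩ := hcase1
          obtain ⟨j0, hj0⟩ := hcase2
          have hfi0 : f' i0 = ⟨a, ha⟩ := Fin.ext (show (f' i0 : ℕ) = a by have := hf' i0; omega)
          have hgj0 : g' j0 = ⟨b, hb⟩ := Fin.ext (show (g' j0 : ℕ) = b by have := hg' j0; omega)
          by_cases hdup : ∃ i1, i1 ≠ i0 ∧ f' i1 = f' i0
          · obtain ⟨i1, hne, heq⟩ := hdup
            have hy : (Y.submatrix f' g').det = 0 :=
              Matrix.det_zero_of_row_eq hne (funext fun j => by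
                rw [Matrix.submatrix_apply, Matrix.submatrix_apply, heq])
            rw [hy, mul_zero]
            exact Ideal.zero_mem _
          · set σ : Equiv.Perm (Fin (k+1)) := Equiv.swap i0 (Fin.last k) with hσ
            set τ : Equiv.Perm (Fin (k+1)) := Equiv.swap j0 (Fin.last k) with hτ
            obtain ⟨ε2, hy⟩ := det_perm_rows Y f' g' σ
            obtain ⟨ε3, hy2⟩ := det_perm_cols Y (f' ∘ σ) g' τ
            have hflast : (f' ∘ σ) (Fin.last k) = (⟨a, ha⟩ : Fin m) := by
              rw [Function.comp_apply, hσ, Equiv.swap_apply_right, hfi0]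
            have hglast : (g' ∘ τ) (Fin.last k) = (⟨b, hb⟩ : Fin n) := by
              rw [Function.comp_apply, hτ, Equiv.swap_apply_right, hgj0]
            have hfsnoc : f' ∘ σ = Fin.snoc (Fin.init (f' ∘ σ)) (⟨a, ha⟩ : Fin m) := by
              rw [← hflast]; exact (Fin.snoc_init_self _).symm
            have hgsnoc : g' ∘ τ = Fin.snoc (Fin.init (g' ∘ τ)) (⟨b, hb⟩ : Fin n) := by
              rw [← hglast]; exact (Fin.snoc_init_self _).symm
            have hslt : ∀ i : Fin k, ((Fin.init (f' ∘ σ)) i : ℕ) < a := by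
              intro i
              have h1 : σ (Fin.castSucc i) ≠ i0 := by
                intro hcon
                have h2 : σ (Fin.last k) = i0 := by rw [hσ]; exact Equiv.swap_apply_right _ _
                exact (Fin.castSucc_lt_last i).ne (σ.injective (hcon.trans h2.symm))
              have h3 : f' (σ (Fin.castSucc i)) ≠ f' i0 := fun hcon => hdup ⟨_, h1, hcon⟩
              have h4 := hf' (σ (Fin.castSucc i))
              rcases Nat.lt_succ_iff_lt_or_eq.mp h4 with h5 | h5
              · exact h5
              · exact absurd (Fin.ext (by rw [h5, hfi0]) : f' (σ (Fin.castSucc i)) = f' i0) h3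
            have hdlt : ∀ j : Fin k, ((Fin.init (g' ∘ τ)) j : ℕ) < b + 1 :=
              fun j => hg' (τ (Fin.castSucc j))
            have hk := key Y hY f g (Fin.init (f' ∘ σ))
              (Fin.snoc (Fin.init (g' ∘ τ)) (⟨b, hb⟩ : Fin n)) (⟨a, ha⟩ : Fin m)
            have hmem : (Y.submatrix f g).det *
                (Y.submatrix (Fin.snoc (Fin.init (f' ∘ σ)) (⟨a, ha⟩ : Fin m))
                  (Fin.snoc (Fin.init (g' ∘ τ)) (⟨b, hb⟩ : Fin n))).det
                ∈ I a (b+1) * I (a+1) b := by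
              rw [hk]
              refine Ideal.sum_mem _ fun i _ => ?_
              exact Ideal.mul_mem_left _ _ (Ideal.mul_mem_mul
                (memI a (b+1) _ _ (snoc_val_lt hslt (hf i))
                  (snoc_val_lt hdlt (Nat.lt_succ_self b)))
                (memI (a+1) b _ g
                  (snoc_val_lt (fun i' => Nat.lt_succ_of_lt (hf _)) (Nat.lt_succ_self a)) hg))
            rw [hy, hy2, hfsnoc, hgsnoc, mul_left_comm ((Y.submatrix f g).det) ε2,
              mul_left_comm ((Y.submatrix f g).det) ε3]
            exact Ideal.mul_mem_left _ _ (Ideal.mul_mem_left _ _ hmem)
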